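/- Under the standing hypotheses there exists a constant c ≥ 0 such that for every continuous compactly supported function f : ℝ² → ℝ, the function ω ↦ ∫_{ℝ²} f dν_ω is μ-integrable on ℳ and (1/μ(ℳ)) ∫_ℳ (∫_{ℝ²} f dν_ω) dμ(ω) = c ∫_{ℝ²} f(x) dx, where dx denotes Lebesgue measure on ℝ². -/

import Mathlib

open MeasureTheory Filter

set_option maxHeartbeats 1000000
open MeasureTheory Filter Set
noncomputable section
namespace SV






abbrev E2 : Type := EuclideanSpace ℝ (Fin 2)
abbrev SL2 : Type := Matrix.SpecialLinearGroup (Fin 2) ℝ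

/-- the linear action of `SL2` on the plane, as in hypothesis `hA`. -/
def act (g : SL2) (x : E2) : E2 :=
  (EuclideanSpace.equiv (Fin 2) ℝ).symm
    (Matrix.mulVec (g : Matrix (Fin 2) (Fin 2) ℝ) (EuclideanSpace.equiv (Fin 2) ℝ x))

lemma act_apply (g : SL2) (x : E2) :
    act g x = (EuclideanSpace.equiv (Fin 2) ℝ).symm
      (Matrix.mulVec (g : Matrix (Fin 2) (Fin 2) ℝ) (EuclideanSpace.equiv (Fin 2) ℝ x)) := rfl

lemma continuous_act (g : SL2) : Continuous (act g) := by
  unfold act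
  exact (EuclideanSpace.equiv (Fin 2) ℝ).symm.continuous.comp
    ((Matrix.mulVecLin (g : Matrix (Fin 2) (Fin 2) ℝ)).continuous_of_finiteDimensional.comp
      (EuclideanSpace.equiv (Fin 2) ℝ).continuous)

lemma measurable_act (g : SL2) : Measurable (act g) := (continuous_act g).measurable

lemma act_act (g h : SL2) (x : E2) : act g (act h x) = act (g * h) x := by
  simp only [act, ContinuousLinearEquiv.apply_symm_apply, Matrix.mulVec_mulVec]
  rfl

lemma act_one (x : E2) : act 1 x = x := by
  simp [act]

lemma act_inv_act (g : SL2) (x : E2) : act g⁻¹ (act g x) = x := by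
  rw [act_act, inv_mul_cancel, act_one]










/-- structure hypothesis on a single fiber measure, as in `hν`. -/
def IsPtMeasure (νω : Measure E2) : Prop :=
  ∃ (ι : Type) (_ : Countable ι) (v : ι → E2) (w : ι → ℝ),
    (∀ k, v k ≠ 0) ∧ (∀ k, 0 < w k) ∧ (∃ C : ℝ, ∀ k, w k ≤ C) ∧
    Tendsto (fun k => ‖v k‖) cofinite atTop ∧
    νω = Measure.sum (fun k => ENNReal.ofReal (w k) • Measure.dirac (v k))

lemma IsPtMeasure.zero_mem (h : IsPtMeasure νω) : νω ({0} : Set E2) = 0 := by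
  obtain ⟨ι, hι, v, w, hv, hw, hC, htend, rfl⟩ := h
  rw [Measure.sum_apply _ (measurableSet_singleton 0)]
  have : ∀ k, (ENNReal.ofReal (w k) • Measure.dirac (v k)) ({0} : Set E2) = 0 := by
    intro k
    rw [Measure.smul_apply, Measure.dirac_apply' _ (measurableSet_singleton 0)]
    simp [Set.indicator_of_notMem, hv k]
  simp [this]

lemma IsPtMeasure.ball_lt_top (h : IsPtMeasure νω) (R : ℝ) :
    νω (Metric.closedBall 0 R) < ⊤ := by
  obtain ⟨ι, hι, v, w, hv, hw, ⟨C, hC⟩, htend, rfl⟩ := h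
  classical
  have hfin : {k : ι | ¬ (R < ‖v k‖)}.Finite := by
    have := htend.eventually (eventually_gt_atTop R)
    rw [Filter.eventually_cofinite] at this
    simpa using this
  rw [Measure.sum_apply _ measurableSet_closedBall]
  have hbound : ∀ k : ι,
      (ENNReal.ofReal (w k) • Measure.dirac (v k)) (Metric.closedBall (0:E2) R)
        ≤ Set.indicator {k : ι | ¬ (R < ‖v k‖)} (fun _ => ENNReal.ofReal C) k := by
    intro k
    rw [Measure.smul_apply, Measure.dirac_apply' _ measurableSet_closedBall]
    by_cases hk : v k ∈ Metric.closedBall (0:E2) R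
    · have hk' : k ∈ {k : ι | ¬ (R < ‖v k‖)} := by
        simp only [Set.mem_setOf_eq, not_lt]
        simpa [Metric.mem_closedBall, dist_zero_right] using hk
      rw [Set.indicator_of_mem hk, Set.indicator_of_mem hk']
      simpa using ENNReal.ofReal_le_ofReal (hC k)
    · rw [Set.indicator_of_notMem hk]
      simp
  calc (∑' k, (ENNReal.ofReal (w k) • Measure.dirac (v k)) (Metric.closedBall (0:E2) R))
      ≤ ∑' k, Set.indicator {k : ι | ¬ (R < ‖v k‖)} (fun _ => ENNReal.ofReal C) k :=
        ENNReal.tsum_le_tsum hbound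
    _ = ∑ k ∈ hfin.toFinset, ENNReal.ofReal C := by
        rw [tsum_eq_sum (s := hfin.toFinset)]
        · refine Finset.sum_congr rfl fun k hk => ?_
          exact Set.indicator_of_mem (by simpa using hk) _
        · intro k hk
          exact Set.indicator_of_notMem (by simpa using hk) _
    _ < ⊤ := by
        rw [Finset.sum_const]
        simp only [nsmul_eq_mul]
        exact ENNReal.mul_lt_top (by simp) ENNReal.ofReal_lt_top

lemma IsPtMeasure.finiteOnCompacts (h : IsPtMeasure νω) :
    IsFiniteMeasureOnCompacts νω := by
  constructor
  intro K hK
  obtain ⟨R, hR⟩ := hK.isBounded.subset_closedBall 0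
  exact lt_of_le_of_lt (measure_mono hR) (h.ball_lt_top R)









/-- continuous cutoffs increasing to `1`. -/
def cut (n : ℕ) (x : E2) : ℝ := max 0 (min 1 ((n : ℝ) + 1 - ‖x‖))

lemma cut_continuous (n : ℕ) : Continuous (cut n) := by
  unfold cut; fun_prop

lemma cut_nonneg (n : ℕ) (x : E2) : 0 ≤ cut n x := le_max_left _ _

lemma cut_le_one (n : ℕ) (x : E2) : cut n x ≤ 1 := by
  unfold cut
  rcases le_or_gt (min 1 ((n : ℝ) + 1 - ‖x‖)) 0 with h | h
  · rw [max_eq_left h]; norm_num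
  · rw [max_eq_right h.le]; exact min_le_left _ _

lemma cut_eq_zero {n : ℕ} {x : E2} (h : (n : ℝ) + 1 ≤ ‖x‖) : cut n x = 0 := by
  unfold cut
  rw [max_eq_left]
  exact le_trans (min_le_right _ _) (by linarith)

lemma cut_eq_one {n : ℕ} {x : E2} (h : ‖x‖ ≤ n) : cut n x = 1 := by
  unfold cut
  rw [min_eq_left (by linarith), max_eq_right (by norm_num)]

lemma cut_mono {m n : ℕ} (h : m ≤ n) (x : E2) : cut m x ≤ cut n x := by
  unfold cut
  have : (m : ℝ) ≤ n := by exact_mod_cast h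
  exact max_le_max le_rfl (min_le_min le_rfl (by linarith))

lemma cut_hasCompactSupport (n : ℕ) : HasCompactSupport (cut n) := by
  apply HasCompactSupport.intro (isCompact_closedBall (0 : E2) ((n : ℝ) + 1))
  intro x hx
  apply cut_eq_zero
  simp only [Metric.mem_closedBall, dist_zero_right, not_le] at hx
  exact hx.le

variable {M : Type} [MeasurableSpace M]

lemma measurable_lintegral_cc {ν : M → Measure E2}
    (hfin : ∀ ω, IsFiniteMeasureOnCompacts (ν ω))
    (h0 : ∀ f : E2 → ℝ, Continuous f → HasCompactSupport f →
      Measurable fun ω => ∫ x, f x ∂ν ω)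
    (f : E2 → ℝ) (hf : Continuous f) (hfc : HasCompactSupport f) (hf0 : ∀ x, 0 ≤ f x) :
    Measurable fun ω => ∫⁻ x, ENNReal.ofReal (f x) ∂ν ω := by
  have key : ∀ ω, ∫⁻ x, ENNReal.ofReal (f x) ∂ν ω = ENNReal.ofReal (∫ x, f x ∂ν ω) := by
    intro ω
    haveI := hfin ω
    rw [← ofReal_integral_eq_lintegral_ofReal (hf.integrable_of_hasCompactSupport hfc)
      (Filter.Eventually.of_forall hf0)]
  simp_rw [key]
  exact ENNReal.measurable_ofReal.comp (h0 f hf hfc)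

theorem measurable_nu {ν : M → Measure E2}
    (hfin : ∀ ω, IsFiniteMeasureOnCompacts (ν ω))
    (h0 : ∀ f : E2 → ℝ, Continuous f → HasCompactSupport f →
      Measurable fun ω => ∫ x, f x ∂ν ω) :
    Measurable ν := by
  -- auxiliary family
  let F : ℕ → Set E2 → M → ENNReal :=
    fun n A ω => ∫⁻ x in A, ENNReal.ofReal (cut n x) ∂ν ω
  have hF : ∀ n A ω, F n A ω = ∫⁻ x in A, ENNReal.ofReal (cut n x) ∂ν ω := fun _ _ _ => rfl
  have FbdU : ∀ n ω (A : Set E2), F n A ω ≤ ν ω (Metric.closedBall 0 ((n:ℝ)+1)) := by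
    intro n ω A
    calc F n A ω ≤ ∫⁻ x, ENNReal.ofReal (cut n x) ∂ν ω :=
          setLIntegral_le_lintegral _ _
      _ ≤ ∫⁻ x, (Metric.closedBall (0:E2) ((n:ℝ)+1)).indicator (fun _ => 1) x ∂ν ω := by
          apply lintegral_mono
          intro x
          by_cases hx : x ∈ Metric.closedBall (0:E2) ((n:ℝ)+1)
          · rw [Set.indicator_of_mem hx]
            simpa using ENNReal.ofReal_le_ofReal (cut_le_one n x)
          · have hx' : ((n:ℝ)+1) ≤ ‖x‖ := by
              simp only [Metric.mem_closedBall, dist_zero_right, not_le] at hx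
              exact hx.le
            simp [Set.indicator_of_notMem hx, cut_eq_zero hx']
      _ = ν ω (Metric.closedBall 0 ((n:ℝ)+1)) := by
          rw [lintegral_indicator measurableSet_closedBall]
          simp
  have Ffin : ∀ n ω (A : Set E2), F n A ω ≠ ⊤ := by
    intro n ω A
    exact ((FbdU n ω A).trans_lt ((hfin ω).lt_top_of_isCompact
      (isCompact_closedBall _ _))).ne
  -- measurability of F n A for all measurable A
  have meas_F : ∀ (n : ℕ) ⦃A : Set E2⦄, MeasurableSet A → Measurable (F n A) := by
    intro n
    apply MeasurableSet.induction_on_open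
    · -- open sets
      intro U hU
      by_cases hUuniv : U = univ
      · subst hUuniv
        have heq : (F n univ) = fun ω => ∫⁻ x, ENNReal.ofReal (cut n x) ∂ν ω := by
          funext ω; rw [hF, Measure.restrict_univ]
        rw [heq]
        exact measurable_lintegral_cc hfin h0 _ (cut_continuous n)
          (cut_hasCompactSupport n) (cut_nonneg n)
      · have hUc : Uᶜ.Nonempty := Set.nonempty_compl.mpr hUuniv
        set f : ℕ → E2 → ℝ := fun k x => cut n x * min 1 (k * Metric.infDist x Uᶜ) with hf
        have hfc : ∀ k, Continuous (f k) := by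
          intro k
          exact (cut_continuous n).mul (continuous_const.min
            (continuous_const.mul (Metric.continuous_infDist_pt Uᶜ)))
        have hfnn : ∀ k x, 0 ≤ f k x := by
          intro k x
          apply mul_nonneg (cut_nonneg n x)
          rcases le_or_gt 1 (k * Metric.infDist x Uᶜ) with h | h
          · rw [min_eq_left h]; norm_num
          · rw [min_eq_right h.le]
            exact mul_nonneg (Nat.cast_nonneg k) Metric.infDist_nonneg
        have hfcs : ∀ k, HasCompactSupport (f k) := by
          intro k
          apply HasCompactSupport.intro (isCompact_closedBall (0 : E2) ((n : ℝ) + 1))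
          intro x hx
          simp only [Metric.mem_closedBall, dist_zero_right, not_le] at hx
          simp [hf, cut_eq_zero hx.le]
        have hmono : ∀ x, Monotone fun k : ℕ => ENNReal.ofReal (f k x) := by
          intro x k l hkl
          apply ENNReal.ofReal_le_ofReal
          apply mul_le_mul_of_nonneg_left _ (cut_nonneg n x)
          apply min_le_min le_rfl
          apply mul_le_mul_of_nonneg_right _ Metric.infDist_nonneg
          exact_mod_cast hkl
        have hsup : ∀ x, (⨆ k : ℕ, ENNReal.ofReal (f k x))
            = U.indicator (fun x => ENNReal.ofReal (cut n x)) x := by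
          intro x
          by_cases hx : x ∈ U
          · rw [Set.indicator_of_mem hx]
            have hd : 0 < Metric.infDist x Uᶜ := by
              apply lt_of_le_of_ne Metric.infDist_nonneg
              intro hcontra
              have hxc : x ∈ closure Uᶜ :=
                (Metric.mem_closure_iff_infDist_zero hUc).mpr hcontra.symm
              rw [hU.isClosed_compl.closure_eq] at hxc
              exact hxc hx
            apply le_antisymm
            · apply iSup_le
              intro k
              apply ENNReal.ofReal_le_ofReal
              calc f k x ≤ cut n x * 1 := by
                    apply mul_le_mul_of_nonneg_left (min_le_left _ _) (cut_nonneg n x)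
                _ = cut n x := mul_one _
            · obtain ⟨k, hk⟩ := exists_nat_ge (1 / Metric.infDist x Uᶜ)
              apply le_iSup_of_le k
              apply ENNReal.ofReal_le_ofReal
              have h1 : 1 ≤ (k : ℝ) * Metric.infDist x Uᶜ := by
                rw [div_le_iff₀ hd] at hk
                linarith
              simp [hf, min_eq_left h1]
          · rw [Set.indicator_of_notMem hx]
            have hx' : x ∈ Uᶜ := hx
            have : Metric.infDist x Uᶜ = 0 := Metric.infDist_zero_of_mem hx'
            simp [hf, this]
        have key : ∀ ω, F n U ω = ⨆ k : ℕ, ∫⁻ x, ENNReal.ofReal (f k x) ∂ν ω := by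
          intro ω
          rw [hF, ← lintegral_indicator hU.measurableSet]
          simp_rw [← hsup]
          rw [lintegral_iSup (fun k => ((hfc k).measurable.ennreal_ofReal))
            (fun k l hkl => fun x => hmono x hkl)]
        rw [funext key]
        exact Measurable.iSup (fun k =>
          measurable_lintegral_cc hfin h0 _ (hfc k) (hfcs k) (hfnn k))
    · -- complements
      intro A hA hmeas
      have key : ∀ ω, F n Aᶜ ω = F n univ ω - F n A ω := by
        intro ω
        have h2 := lintegral_add_compl (fun x => ENNReal.ofReal (cut n x)) hA (μ := ν ω)
        rw [hF, hF, hF, Measure.restrict_univ]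
        exact ENNReal.eq_sub_of_add_eq (Ffin n ω A) (by rw [add_comm]; exact h2)
      rw [funext key]
      apply Measurable.sub
      · have : (F n univ) = fun ω => ∫⁻ x, ENNReal.ofReal (cut n x) ∂ν ω := by
          funext ω; rw [hF, Measure.restrict_univ]
        rw [this]
        exact measurable_lintegral_cc hfin h0 _ (cut_continuous n)
          (cut_hasCompactSupport n) (cut_nonneg n)
      · exact hmeas
    · -- disjoint unions
      intro g hdisj hgmeas hres
      have key : ∀ ω, F n (⋃ i, g i) ω = ∑' i, F n (g i) ω := by
        intro ω
        simp only [hF]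
        exact lintegral_iUnion hgmeas hdisj _
      rw [funext key]
      exact Measurable.ennreal_tsum hres
  -- supremum over n recovers the measure
  apply Measure.measurable_of_measurable_coe
  intro A hA
  have key : ∀ ω, ν ω A = ⨆ n : ℕ, F n A ω := by
    intro ω
    have hsup : ∀ x : E2, (⨆ n : ℕ, ENNReal.ofReal (cut n x)) = 1 := by
      intro x
      apply le_antisymm
      · apply iSup_le; intro n
        simpa using ENNReal.ofReal_le_ofReal (cut_le_one n x)
      · obtain ⟨n, hn⟩ := exists_nat_ge ‖x‖
        apply le_iSup_of_le n
        rw [cut_eq_one hn]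
        simp
    calc ν ω A = ∫⁻ _x in A, 1 ∂ν ω := by rw [setLIntegral_one]
      _ = ∫⁻ x in A, ⨆ n : ℕ, ENNReal.ofReal (cut n x) ∂ν ω := by
          apply lintegral_congr; intro x; rw [hsup]
      _ = ⨆ n : ℕ, F n A ω := by
          rw [lintegral_iSup (fun k => ((cut_continuous k).measurable.ennreal_ofReal))]
          intro k l hkl x
          exact ENNReal.ofReal_le_ofReal (cut_mono hkl x)
  simp_rw [key]
  exact Measurable.iSup (fun n => meas_F n hA)








def cross (e x : E2) : ℝ := e 0 * x 1 - e 1 * x 0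

lemma equiv_symm_apply' (v : Fin 2 → ℝ) (i : Fin 2) :
    (EuclideanSpace.equiv (Fin 2) ℝ).symm v i = v i := rfl

lemma equiv_apply' (x : E2) (i : Fin 2) :
    (EuclideanSpace.equiv (Fin 2) ℝ) x i = x i := rfl

lemma act_one' (x : E2) : act 1 x = x := by simp [act]

lemma norm_le_of_sq (y : E2) (c : ℝ) (hc : 0 ≤ c) (h : (y 0)^2 + (y 1)^2 ≤ c^2) :
    ‖y‖ ≤ c := by
  have hn : ‖y‖ = Real.sqrt ((y 0)^2 + (y 1)^2) := by
    rw [EuclideanSpace.norm_eq]; simp [Fin.sum_univ_two, sq_abs]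
  rw [hn]
  calc Real.sqrt ((y 0)^2 + (y 1)^2) ≤ Real.sqrt (c^2) := Real.sqrt_le_sqrt h
    _ = c := Real.sqrt_sq hc

/-- For a unit vector `e` and scale `a ≠ 0`, the element of `SL2` that squeezes
the direction `e` by `a` and expands the perpendicular direction. -/
def mkg (e : E2) (a : ℝ) : SL2 :=
  if h : ‖e‖ = 1 ∧ a ≠ 0 then
    ⟨!![e 0 / a, e 1 / a; -(a * e 1), a * e 0], by
      rw [Matrix.det_fin_two_of]
      have h1 : (e 0)^2 + (e 1)^2 = 1 := by
        have : ‖e‖^2 = (e 0)^2 + (e 1)^2 := by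
          rw [EuclideanSpace.norm_eq]
          rw [Real.sq_sqrt (by positivity)]
          simp [Fin.sum_univ_two, sq_abs]
        rw [h.1] at this; simpa using this.symm
      have ha : a ≠ 0 := h.2
      have : e 0 / a * (a * e 0) - e 1 / a * -(a * e 1) = (e 0)^2 + (e 1)^2 := by
        field_simp; ring
      rw [this, h1]⟩
  else 1

lemma act_mkg (e : E2) (a : ℝ) (h : ‖e‖ = 1 ∧ a ≠ 0) (x : E2) :
    (act (mkg e a) x 0 = (e 0 * x 0 + e 1 * x 1) / a) ∧
    (act (mkg e a) x 1 = a * cross e x) := by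
  have hcoe : ((mkg e a : SL2) : Matrix (Fin 2) (Fin 2) ℝ)
      = !![e 0 / a, e 1 / a; -(a * e 1), a * e 0] := by
    exact congrArg Subtype.val (dif_pos h)
  unfold act cross
  rw [hcoe]
  constructor
  · rw [equiv_symm_apply']
    simp [Matrix.mulVec, dotProduct, Fin.sum_univ_two, equiv_apply', Matrix.vecHead, Matrix.vecTail]
    ring
  · rw [equiv_symm_apply']
    simp [Matrix.mulVec, dotProduct, Fin.sum_univ_two, equiv_apply', Matrix.vecHead, Matrix.vecTail]
    ring

theorem covering (T₀ T : ℝ) (hT₀ : 0 < T₀) (hT : 0 < T) :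
    ∃ s : Finset SL2, ∀ x : E2, ‖x‖ ≤ T → ∃ g ∈ s, ‖act g x‖ ≤ T₀ := by
  classical
  set a : ℝ := 2 * T / T₀ with ha_def
  have ha : 0 < a := by positivity
  set h : ℝ := T₀ ^ 2 / (4 * T ^ 2) with hh_def
  have hh : 0 < h := by positivity
  -- compactness: finitely many directions suffice
  have hcover : Metric.sphere (0 : E2) 1 ⊆
      ⋃ e ∈ Metric.sphere (0 : E2) 1, {u : E2 | |cross e u| < h} := by
    intro u hu
    refine Set.mem_biUnion hu ?_
    simp only [Set.mem_setOf_eq, cross]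
    have : u 0 * u 1 - u 1 * u 0 = 0 := by ring
    rw [this]
    simpa using hh
  obtain ⟨t, hts, htfin, htcov⟩ :=
    (isCompact_sphere (0 : E2) 1).elim_finite_subcover_image
      (fun e _ => by
        have : Continuous fun u : E2 => |cross e u| := by
          apply Continuous.abs
          exact ((continuous_const.mul (PiLp.continuous_apply 2 _ 1)).sub
            (continuous_const.mul (PiLp.continuous_apply 2 _ 0)))
        exact isOpen_lt this continuous_const) hcover
  refine ⟨insert 1 (htfin.toFinset.image (fun e => mkg e a)), ?_⟩
  intro x hx
  by_cases hx0 : x = 0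
  · refine ⟨1, Finset.mem_insert_self _ _, ?_⟩
    subst hx0
    rw [act_one']
    simpa using hT₀.le
  · have hxn : 0 < ‖x‖ := norm_pos_iff.mpr hx0
    set u : E2 := ‖x‖⁻¹ • x with hu_def
    have hu : u ∈ Metric.sphere (0 : E2) 1 := by
      simp only [Metric.mem_sphere, dist_zero_right, hu_def, norm_smul]
      rw [norm_inv, norm_norm]
      field_simp
    obtain ⟨e, het, heu⟩ := Set.mem_iUnion₂.mp (htcov hu)
    have he1 : ‖e‖ = 1 := by simpa using hts het
    refine ⟨mkg e a, Finset.mem_insert_of_mem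
      (Finset.mem_image.mpr ⟨e, htfin.mem_toFinset.mpr het, rfl⟩), ?_⟩
    have hcross : |cross e x| ≤ ‖x‖ * h := by
      have hcu : cross e u = ‖x‖⁻¹ * cross e x := by
        simp only [hu_def, cross]
        have h0 : (‖x‖⁻¹ • x) 0 = ‖x‖⁻¹ * x 0 := rfl
        have h1 : (‖x‖⁻¹ • x) 1 = ‖x‖⁻¹ * x 1 := rfl
        rw [h0, h1]; ring
      have := le_of_lt (by simpa only [Set.mem_setOf_eq] using heu)
      rw [hcu, abs_mul, abs_inv, abs_norm] at this
      calc |cross e x| = ‖x‖ * (‖x‖⁻¹ * |cross e x|) := by field_simp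
        _ ≤ ‖x‖ * h := by
            apply mul_le_mul_of_nonneg_left _ hxn.le
            exact this
    have hdot : |e 0 * x 0 + e 1 * x 1| ≤ ‖x‖ := by
      have := abs_real_inner_le_norm e x
      rw [PiLp.inner_apply] at this
      simp only [RCLike.inner_apply, starRingEnd_apply, Fin.sum_univ_two] at this
      rw [he1, one_mul] at this
      calc |e 0 * x 0 + e 1 * x 1| = |(starRingEnd ℝ) (e 0) * x 0 +
          (starRingEnd ℝ) (e 1) * x 1| := by simp [starRingEnd_apply]
        _ ≤ ‖x‖ := by simpa [mul_comm] using this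
    obtain ⟨hc0, hc1⟩ := act_mkg e a ⟨he1, ha.ne'⟩ x
    apply norm_le_of_sq _ _ hT₀.le
    rw [hc0, hc1]
    have e1 : ((e 0 * x 0 + e 1 * x 1) / a) ^ 2 ≤ (T₀ / 2) ^ 2 := by
      rw [div_pow]
      rw [div_le_iff₀ (by positivity)]
      have hb : |e 0 * x 0 + e 1 * x 1| ≤ T := hdot.trans hx
      have : (e 0 * x 0 + e 1 * x 1) ^ 2 ≤ T ^ 2 := by
        rw [← sq_abs]
        exact pow_le_pow_left₀ (abs_nonneg _) hb 2
      calc (e 0 * x 0 + e 1 * x 1) ^ 2 ≤ T ^ 2 := this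
        _ = (T₀ / 2)^2 * a ^2 := by rw [ha_def]; field_simp
    have e2 : (a * cross e x) ^ 2 ≤ (T₀ / 2) ^ 2 := by
      have hcx : |cross e x| ≤ T * h := by
        calc |cross e x| ≤ ‖x‖ * h := hcross
          _ ≤ T * h := mul_le_mul_of_nonneg_right hx hh.le
      have : (cross e x) ^ 2 ≤ (T * h) ^ 2 := by
        rw [← sq_abs]
        exact pow_le_pow_left₀ (abs_nonneg _) hcx 2
      calc (a * cross e x) ^ 2 = a ^ 2 * (cross e x) ^ 2 := by ring
        _ ≤ a ^ 2 * (T * h) ^ 2 := by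
            apply mul_le_mul_of_nonneg_left this (by positivity)
        _ = (T₀ / 2) ^ 2 := by
            rw [ha_def, hh_def]; field_simp; ring
    calc ((e 0 * x 0 + e 1 * x 1) / a) ^ 2 + (a * cross e x) ^ 2
        ≤ (T₀/2)^2 + (T₀/2)^2 := add_le_add e1 e2
      _ ≤ T₀ ^ 2 := by nlinarith [hT₀]












/-- The punctured `x`-axis is null for any measure invariant under the lower
unipotent shears and finite on balls. -/
theorem axis_null (P : Measure (ℝ × ℝ))
    (hfin : ∀ R : ℝ, P (Metric.closedBall 0 R) ≠ ⊤)
    (hshear : ∀ t : ℝ, ∀ A : Set (ℝ × ℝ), MeasurableSet A →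
      P ((fun p : ℝ × ℝ => (p.1, t * p.1 + p.2)) ⁻¹' A) = P A) :
    P {p : ℝ × ℝ | p.2 = 0 ∧ p ≠ 0} = 0 := by
  classical
  -- segments of the x-axis
  set A : ℝ → Set (ℝ × ℝ) := fun R => {p : ℝ × ℝ | p.2 = 0 ∧ 1 / R ≤ |p.1| ∧ |p.1| ≤ R}
    with hA_def
  have hAmeas : ∀ R, MeasurableSet (A R) := by
    intro R
    apply MeasurableSet.inter
    · exact measurableSet_eq_fun measurable_snd measurable_const
    · apply MeasurableSet.inter
      · exact measurableSet_le measurable_const measurable_fst.abs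
      · exact measurableSet_le measurable_fst.abs measurable_const
  have hAnull : ∀ R : ℝ, 1 ≤ R → P (A R) = 0 := by
    intro R hR
    have hRpos : 0 < R := lt_of_lt_of_le one_pos hR
    -- tilted copies of the segment
    set B : ℕ → Set (ℝ × ℝ) := fun n =>
      (fun p : ℝ × ℝ => (p.1, -(1 / ((n : ℝ) + 1)) * p.1 + p.2)) ⁻¹' A R with hB_def
    have hBP : ∀ n, P (B n) = P (A R) := fun n => hshear _ _ (hAmeas R)
    have hBmem : ∀ n (p : ℝ × ℝ), p ∈ B n ↔
        p.2 = (1 / ((n : ℝ) + 1)) * p.1 ∧ 1 / R ≤ |p.1| ∧ |p.1| ≤ R := by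
      intro n p
      simp only [hB_def, Set.mem_preimage, hA_def, Set.mem_setOf_eq]
      constructor
      · rintro ⟨h1, h2⟩; exact ⟨by linarith, h2⟩
      · rintro ⟨h1, h2⟩; exact ⟨by linarith, h2⟩
    have hBdisj : Pairwise (Function.onFun Disjoint B) := by
      intro n m hnm
      rw [Function.onFun, Set.disjoint_left]
      intro p hpn hpm
      rw [hBmem] at hpn hpm
      have hp1 : p.1 ≠ 0 := by
        intro h
        rw [h] at hpn
        simp only [abs_zero] at hpn
        have := hpn.2.1
        have : (0:ℝ) < 1 / R := by positivity
        linarith [hpn.2.1]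
      have : (1 / ((n : ℝ) + 1)) * p.1 = (1 / ((m : ℝ) + 1)) * p.1 := by
        rw [← hpn.1, ← hpm.1]
      have hfrac : (1 / ((n : ℝ) + 1)) = (1 / ((m : ℝ) + 1)) :=
        mul_right_cancel₀ hp1 this
      field_simp at hfrac
      exact hnm (by exact_mod_cast (by linarith [hfrac] : (n:ℝ) = m))
    have hBsub : ∀ n, B n ⊆ Metric.closedBall 0 R := by
      intro n p hp
      rw [hBmem] at hp
      rw [Metric.mem_closedBall, Prod.dist_eq]
      have hn1 : (1:ℝ) ≤ (n : ℝ) + 1 := by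
        have : (0:ℝ) ≤ n := Nat.cast_nonneg n
        linarith
      have h2 : |p.2| ≤ R := by
        rw [hp.1, abs_mul, abs_of_pos (by positivity : (0:ℝ) < 1 / ((n:ℝ)+1))]
        calc 1 / ((n : ℝ) + 1) * |p.1| ≤ 1 * |p.1| := by
              apply mul_le_mul_of_nonneg_right _ (abs_nonneg _)
              rw [div_le_one (by linarith)]; linarith
          _ = |p.1| := one_mul _
          _ ≤ R := hp.2.2
      apply max_le
      · simpa [Real.dist_eq] using hp.2.2
      · simpa [Real.dist_eq] using h2
    by_contra hne
    have htop : ∑' _ : ℕ, P (A R) = ⊤ := ENNReal.tsum_const_eq_top_of_ne_zero hne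
    have : P (⋃ n, B n) = ∑' n, P (B n) := by
      apply measure_iUnion hBdisj
      intro n
      exact (measurable_fst.prodMk ((measurable_const.mul measurable_fst).add
        measurable_snd)) (hAmeas R)
    have hle : P (⋃ n, B n) ≤ P (Metric.closedBall 0 R) :=
      measure_mono (Set.iUnion_subset hBsub)
    rw [this] at hle
    simp_rw [hBP] at hle
    rw [htop] at hle
    exact hfin R (top_le_iff.mp hle)
  -- union over natural R
  have hcover : {p : ℝ × ℝ | p.2 = 0 ∧ p ≠ 0} ⊆ ⋃ n : ℕ, A ((n : ℝ) + 1) := by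
    intro p hp
    obtain ⟨hp2, hp0⟩ := hp
    have hp1 : p.1 ≠ 0 := by
      intro h
      apply hp0
      have : p = (p.1, p.2) := rfl
      rw [this, h, hp2]; rfl
    have habs : 0 < |p.1| := abs_pos.mpr hp1
    obtain ⟨n, hn⟩ := exists_nat_ge (max |p.1| (1 / |p.1|))
    refine Set.mem_iUnion.mpr ⟨n, ?_⟩
    refine ⟨hp2, ?_, ?_⟩
    · have h1 : 1 / |p.1| ≤ (n : ℝ) + 1 :=
        le_trans (le_trans (le_max_right _ _) hn) (by linarith)
      rw [div_le_iff₀ habs] at h1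
      rw [div_le_iff₀ (by positivity : (0:ℝ) < (n:ℝ)+1)]
      linarith [h1, mul_comm ((n:ℝ)+1) |p.1|]
    · exact le_trans (le_trans (le_max_left _ _) hn) (by linarith)
  apply measure_mono_null hcover
  apply measure_iUnion_null
  intro n
  apply hAnull
  have : (0:ℝ) ≤ n := Nat.cast_nonneg n
  linarith








/-- A measure on the plane which is invariant under all upper unipotent shears,
finite on balls, and gives no mass to the `x`-axis, is invariant under all
horizontal translations. -/
theorem shear_to_translation (P : Measure (ℝ × ℝ))
    (hfin : ∀ R : ℝ, P (Metric.closedBall 0 R) ≠ ⊤)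
    (haxis : P {p : ℝ × ℝ | p.2 = 0} = 0)
    (hshear : ∀ t : ℝ, ∀ A : Set (ℝ × ℝ), MeasurableSet A →
      P ((fun p : ℝ × ℝ => (p.1 + t * p.2, p.2)) ⁻¹' A) = P A) :
    ∀ c : ℝ, ∀ A : Set (ℝ × ℝ), MeasurableSet A →
      P ((fun p : ℝ × ℝ => (p.1 + c, p.2)) ⁻¹' A) = P A := by
  classical
  set Ψ : ℝ × ℝ → ℝ × ℝ := fun p => (p.1 / p.2, p.2) with hΨ_def
  have hΨm : Measurable Ψ := (measurable_fst.div measurable_snd).prodMk measurable_snd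
  set Φ : ℝ × ℝ → ℝ × ℝ := fun z => (z.1 * z.2, z.2) with hΦ_def
  have hΦm : Measurable Φ := (measurable_fst.mul measurable_snd).prodMk measurable_snd
  set ψ : Measure (ℝ × ℝ) := P.map Ψ with hψ_def
  have hax_meas : MeasurableSet {p : ℝ × ℝ | p.2 = 0} :=
    measurableSet_eq_fun measurable_snd measurable_const
  -- the axis is still null for ψ
  have hψaxis : ψ {z : ℝ × ℝ | z.2 = 0} = 0 := by
    rw [hψ_def, Measure.map_apply hΨm hax_meas]
    convert haxis using 2
    rfl
  -- finiteness on rectangles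
  have hIccfin : ∀ R R' : ℝ, 0 ≤ R → 0 ≤ R' →
      ψ (Icc (-R) R ×ˢ Icc (-R') R') ≠ ⊤ := by
    intro R R' hR hR'
    rw [hψ_def, Measure.map_apply hΨm (measurableSet_Icc.prod measurableSet_Icc)]
    have hsub : Ψ ⁻¹' (Icc (-R) R ×ˢ Icc (-R') R') ⊆
        Metric.closedBall 0 (R * R' + R') ∪ {p : ℝ × ℝ | p.2 = 0} := by
      intro p hp
      simp only [Set.mem_preimage, hΨ_def, Set.mem_prod, Set.mem_Icc] at hp
      by_cases hp2 : p.2 = 0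
      · exact Or.inr hp2
      · left
        rw [Metric.mem_closedBall, Prod.dist_eq]
        have h1 : |p.1 / p.2| ≤ R := abs_le.mpr hp.1
        have h2 : |p.2| ≤ R' := abs_le.mpr hp.2
        have hp1 : |p.1| ≤ R * R' := by
          have : p.1 = (p.1 / p.2) * p.2 := by field_simp
          rw [this, abs_mul]
          exact mul_le_mul h1 h2 (abs_nonneg _) hR
        apply max_le
        · rw [show (0:ℝ×ℝ).1 = (0:ℝ) from rfl, Real.dist_0_eq_abs]
          nlinarith [abs_nonneg p.2]
        · rw [show (0:ℝ×ℝ).2 = (0:ℝ) from rfl, Real.dist_0_eq_abs]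
          nlinarith [abs_nonneg p.1]
    apply ne_top_of_le_ne_top _ (measure_mono hsub)
    apply ne_top_of_le_ne_top _ (measure_union_le _ _)
    rw [haxis, add_zero]
    exact hfin _
  -- shear invariance becomes translation invariance for ψ
  have hSP : ∀ t : ℝ, Measure.map (fun p : ℝ × ℝ => (p.1 + t * p.2, p.2)) P = P := by
    intro t
    apply Measure.ext
    intro A hA
    rw [Measure.map_apply (f := fun p : ℝ × ℝ => (p.1 + t * p.2, p.2)) ((measurable_fst.add (measurable_const.mul
      measurable_snd)).prodMk measurable_snd) hA]
    exact hshear t A hA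
  have hψT : ∀ t : ℝ, Measure.map (fun z : ℝ × ℝ => (z.1 + t, z.2)) ψ = ψ := by
    intro t
    have hTm : Measurable (fun z : ℝ × ℝ => (z.1 + t, z.2)) :=
      (measurable_fst.add measurable_const).prodMk measurable_snd
    have hSm : Measurable (fun p : ℝ × ℝ => (p.1 + t * p.2, p.2)) :=
      (measurable_fst.add (measurable_const.mul measurable_snd)).prodMk measurable_snd
    calc Measure.map (fun z : ℝ × ℝ => (z.1 + t, z.2)) ψ
        = Measure.map ((fun z : ℝ × ℝ => (z.1 + t, z.2)) ∘ Ψ) P := by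
          rw [hψ_def, Measure.map_map hTm hΨm]
      _ = Measure.map (Ψ ∘ (fun p : ℝ × ℝ => (p.1 + t * p.2, p.2))) P := by
          apply Measure.map_congr
          have : {p : ℝ × ℝ | ¬ ((fun z : ℝ × ℝ => (z.1 + t, z.2)) ∘ Ψ) p
              = (Ψ ∘ (fun p : ℝ × ℝ => (p.1 + t * p.2, p.2))) p} ⊆
              {p : ℝ × ℝ | p.2 = 0} := by
            intro p hp
            simp only [Set.mem_setOf_eq, Function.comp_apply, hΨ_def] at hp ⊢
            by_contra hp2
            apply hp
            have : (p.1 + t * p.2) / p.2 = p.1 / p.2 + t := by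
              field_simp
            rw [this]
          exact measure_mono_null this haxis
      _ = Measure.map Ψ (Measure.map (fun p : ℝ × ℝ => (p.1 + t * p.2, p.2)) P) := by
          rw [Measure.map_map hΨm hSm]
      _ = ψ := by rw [hSP t, hψ_def]
  -- the fiber measure σ
  set σ : Measure ℝ := Measure.map Prod.snd (ψ.restrict ((Icc (0:ℝ) 1) ×ˢ univ))
    with hσ_def
  have hσ : ∀ t : Set ℝ, MeasurableSet t → σ t = ψ ((Icc (0:ℝ) 1) ×ˢ t) := by
    intro t ht
    rw [hσ_def, Measure.map_apply measurable_snd ht,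
      Measure.restrict_apply (measurable_snd ht)]
    congr 1
    ext z
    simp only [Set.mem_inter_iff, Set.mem_preimage, Set.mem_prod, Set.mem_univ, and_true]
    exact and_comm
  -- rectangle formula, bounded case
  have hrect_bdd : ∀ (R' : ℝ), 0 ≤ R' → ∀ t : Set ℝ, MeasurableSet t →
      t ⊆ Icc (-R') R' → ∀ s : Set ℝ, MeasurableSet s →
      ψ (s ×ˢ t) = volume s * σ t := by
    intro R' hR' t ht htb
    set ρ : Measure ℝ := Measure.map Prod.fst (ψ.restrict (univ ×ˢ t)) with hρ_def
    have hρ : ∀ s : Set ℝ, MeasurableSet s → ρ s = ψ (s ×ˢ t) := by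
      intro s hs
      rw [hρ_def, Measure.map_apply measurable_fst hs,
        Measure.restrict_apply (measurable_fst hs)]
      congr 1
      ext z
      simp only [Set.mem_inter_iff, Set.mem_preimage, Set.mem_prod, Set.mem_univ, true_and]
    haveI hρinv : ρ.IsAddLeftInvariant := by
      constructor
      intro c
      apply Measure.ext
      intro s hs
      rw [Measure.map_apply (measurable_const_add c) hs,
        hρ _ (measurable_const_add c hs), hρ s hs]
      have hseteq : ((fun x => c + x) ⁻¹' s) ×ˢ t
          = (fun z : ℝ × ℝ => (z.1 + c, z.2)) ⁻¹' (s ×ˢ t) := by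
        ext z
        simp only [Set.mem_prod, Set.mem_preimage]
        rw [add_comm]
      rw [hseteq, ← Measure.map_apply (f := fun z : ℝ × ℝ => (z.1 + c, z.2)) ((measurable_fst.add measurable_const).prodMk
        measurable_snd) (hs.prod ht), hψT c]
    haveI hρfin : IsFiniteMeasureOnCompacts ρ := by
      constructor
      intro K hK
      obtain ⟨R, hRK⟩ := hK.isBounded.subset_closedBall 0
      have hR0 : 0 ≤ max R 0 := le_max_right _ _
      have hsub : K ⊆ Icc (-(max R 0)) (max R 0) := by
        intro x hx
        have := hRK hx
        rw [Real.closedBall_eq_Icc, zero_sub, zero_add] at this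
        exact ⟨le_trans (neg_le_neg (le_max_left R 0)) this.1,
          le_trans this.2 (le_max_left R 0)⟩
      rw [hρ K hK.measurableSet]
      apply lt_of_le_of_lt (measure_mono (Set.prod_mono hsub htb))
      exact lt_top_iff_ne_top.mpr (hIccfin _ _ hR0 hR')
    have hρeq := Measure.isAddLeftInvariant_eq_smul ρ volume
    intro s hs
    have h1 : ψ (s ×ˢ t) = ρ s := (hρ s hs).symm
    have h2 : ψ (Icc (0:ℝ) 1 ×ˢ t) = ρ (Icc 0 1) := (hρ _ measurableSet_Icc).symm
    have e1 : ρ s = (ρ.addHaarScalarFactor volume : ENNReal) * volume s := by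
      conv_lhs => rw [hρeq]
      simp [Measure.smul_apply]
    have e2 : ρ (Icc (0:ℝ) 1) = (ρ.addHaarScalarFactor volume : ENNReal) := by
      conv_lhs => rw [hρeq]
      rw [Measure.smul_apply, Real.volume_Icc]
      simp [ENNReal.smul_def]
    rw [h1, e1, hσ t ht, h2, e2, mul_comm]
  -- rectangle formula, general case
  have hrect : ∀ s t : Set ℝ, MeasurableSet s → MeasurableSet t →
      ψ (s ×ˢ t) = volume s * σ t := by
    intro s t hs ht
    set tn : ℕ → Set ℝ := fun n => t ∩ Icc (-(n:ℝ)) n with htn_def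
    have htn_meas : ∀ n, MeasurableSet (tn n) := fun n => ht.inter measurableSet_Icc
    have htn_mono : Monotone tn := by
      intro n m hnm
      apply Set.inter_subset_inter_right
      apply Set.Icc_subset_Icc <;> · simp; exact_mod_cast hnm
    have htn_union : (⋃ n, tn n) = t := by
      ext x
      simp only [Set.mem_iUnion, htn_def, Set.mem_inter_iff, Set.mem_Icc]
      constructor
      · rintro ⟨n, hx, _⟩; exact hx
      · intro hx
        obtain ⟨n, hn⟩ := exists_nat_ge |x|
        exact ⟨n, hx, by rw [abs_le] at hn; exact hn⟩
    have hsn_union : (⋃ n, s ×ˢ tn n) = s ×ˢ t := by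
      rw [← Set.prod_iUnion, htn_union]
    have hdir : Directed (· ⊆ ·) fun n => s ×ˢ tn n :=
      (Monotone.directed_le fun n m hnm => Set.prod_mono subset_rfl (htn_mono hnm))
    have hdir' : Directed (· ⊆ ·) tn := Monotone.directed_le htn_mono
    calc ψ (s ×ˢ t) = ψ (⋃ n, s ×ˢ tn n) := by rw [hsn_union]
      _ = ⨆ n, ψ (s ×ˢ tn n) := hdir.measure_iUnion
      _ = ⨆ n, volume s * σ (tn n) := by
          congr 1
          funext n
          exact hrect_bdd n (Nat.cast_nonneg n) (tn n) (htn_meas n)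
            (Set.inter_subset_right) s hs
      _ = volume s * ⨆ n, σ (tn n) := by rw [ENNReal.mul_iSup]
      _ = volume s * σ (⋃ n, tn n) := by rw [hdir'.measure_iUnion]
      _ = volume s * σ t := by rw [htn_union]
  -- σ is sigma-finite
  haveI hσsf : SigmaFinite σ := by
    apply Measure.sigmaFinite_of_countable (S := Set.range (fun n : ℕ => Icc (-(n:ℝ)) n))
    · exact Set.countable_range _
    · rintro _ ⟨n, rfl⟩
      rw [hσ _ measurableSet_Icc]
      exact lt_top_iff_ne_top.mpr (by
        apply ne_top_of_le_ne_top (hIccfin 1 n zero_le_one (Nat.cast_nonneg n))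
        apply measure_mono
        apply Set.prod_mono _ subset_rfl
        intro x hx
        exact ⟨le_trans (by norm_num) hx.1, hx.2⟩)
    · rw [Set.sUnion_range]
      ext x
      simp only [Set.mem_iUnion, Set.mem_Icc, Set.mem_univ, iff_true]
      obtain ⟨n, hn⟩ := exists_nat_ge |x|
      exact ⟨n, by rw [abs_le] at hn; exact hn⟩
  -- ψ is the product measure
  have hprod : volume.prod σ = ψ := Measure.prod_eq (fun s t hs ht => hrect s t hs ht)
  -- invariance of ψ under the twisted translations G
  have hG : ∀ (c : ℝ) (B : Set (ℝ × ℝ)), MeasurableSet B →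
      ψ ((fun z : ℝ × ℝ => (z.1 + c / z.2, z.2)) ⁻¹' B) = ψ B := by
    intro c B hB
    have hGm : Measurable (fun z : ℝ × ℝ => (z.1 + c / z.2, z.2)) :=
      (measurable_fst.add (measurable_const.div measurable_snd)).prodMk measurable_snd
    rw [← hprod]
    rw [Measure.prod_apply_symm (hGm hB), Measure.prod_apply_symm hB]
    apply lintegral_congr
    intro v
    have hslice : (fun x => (x, v)) ⁻¹' ((fun z : ℝ × ℝ => (z.1 + c / z.2, z.2)) ⁻¹' B)
        = (fun x => x + c / v) ⁻¹' ((fun x => (x, v)) ⁻¹' B) := by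
      ext x
      simp only [Set.mem_preimage]
    rw [hslice]
    exact measure_preimage_add_right volume (c / v) _
  -- unwinding: P is the image of ψ under Φ
  have hPmap : Measure.map Φ ψ = P := by
    rw [hψ_def, Measure.map_map hΦm hΨm]
    have hae : Φ ∘ Ψ =ᶠ[ae P] id := by
      have hsub : {p : ℝ × ℝ | ¬ (Φ ∘ Ψ) p = id p} ⊆ {p : ℝ × ℝ | p.2 = 0} := by
        intro p hp
        simp only [Set.mem_setOf_eq, Function.comp_apply, hΦ_def, hΨ_def, id_eq] at hp ⊢
        by_contra hp2
        apply hp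
        have : p.1 / p.2 * p.2 = p.1 := by field_simp
        rw [this]
      exact measure_mono_null hsub haxis
    rw [Measure.map_congr hae, Measure.map_id]
  intro c A hA
  have hLm : Measurable (fun p : ℝ × ℝ => (p.1 + c, p.2)) :=
    (measurable_fst.add measurable_const).prodMk measurable_snd
  have hGm : Measurable (fun z : ℝ × ℝ => (z.1 + c / z.2, z.2)) :=
    (measurable_fst.add (measurable_const.div measurable_snd)).prodMk measurable_snd
  calc P ((fun p : ℝ × ℝ => (p.1 + c, p.2)) ⁻¹' A)
      = (Measure.map Φ ψ) ((fun p : ℝ × ℝ => (p.1 + c, p.2)) ⁻¹' A) := by rw [hPmap]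
    _ = ψ (Φ ⁻¹' ((fun p : ℝ × ℝ => (p.1 + c, p.2)) ⁻¹' A)) :=
        Measure.map_apply hΦm (hLm hA)
    _ = (Measure.map ((fun p : ℝ × ℝ => (p.1 + c, p.2)) ∘ Φ) ψ) A := by
        rw [Measure.map_apply (hLm.comp hΦm) hA, Set.preimage_comp]
    _ = (Measure.map (Φ ∘ (fun z : ℝ × ℝ => (z.1 + c / z.2, z.2))) ψ) A := by
        congr 1
        apply Measure.map_congr
        have hsub : {z : ℝ × ℝ | ¬ ((fun p : ℝ × ℝ => (p.1 + c, p.2)) ∘ Φ) z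
            = (Φ ∘ (fun z : ℝ × ℝ => (z.1 + c / z.2, z.2))) z} ⊆
            {z : ℝ × ℝ | z.2 = 0} := by
          intro z hz
          simp only [Set.mem_setOf_eq, Function.comp_apply, hΦ_def] at hz ⊢
          by_contra hz2
          apply hz
          have : (z.1 + c / z.2) * z.2 = z.1 * z.2 + c := by
            field_simp
          rw [this]
        exact measure_mono_null hsub hψaxis
    _ = ψ ((fun z : ℝ × ℝ => (z.1 + c / z.2, z.2)) ⁻¹' (Φ ⁻¹' A)) := by
        rw [Measure.map_apply (hΦm.comp hGm) hA, Set.preimage_comp]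
    _ = ψ (Φ ⁻¹' A) := hG c _ (hΦm hA)
    _ = (Measure.map Φ ψ) A := (Measure.map_apply hΦm hA).symm
    _ = P A := by rw [hPmap]


/-- Classification: an `SL(2,ℝ)`-invariant measure on the plane, finite on
balls, with no atom at the origin, is a multiple of Lebesgue measure. -/
theorem classify (P : Measure (ℝ × ℝ))
    (hfin : ∀ R : ℝ, P (Metric.closedBall 0 R) ≠ ⊤)
    (hinv : ∀ a b c d : ℝ, a * d - b * c = 1 → ∀ A : Set (ℝ × ℝ), MeasurableSet A →
      P ((fun p : ℝ × ℝ => (a * p.1 + b * p.2, c * p.1 + d * p.2)) ⁻¹' A) = P A)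
    (hzero : P ({0} : Set (ℝ × ℝ)) = 0) :
    ∃ c : NNReal, P = c • volume := by
  classical
  -- shear invariances from hinv
  have hupper : ∀ t : ℝ, ∀ A : Set (ℝ × ℝ), MeasurableSet A →
      P ((fun p : ℝ × ℝ => (p.1 + t * p.2, p.2)) ⁻¹' A) = P A := by
    intro t A hA
    have h := hinv 1 t 0 1 (by ring) A hA
    rw [show (fun p : ℝ × ℝ => (1 * p.1 + t * p.2, 0 * p.1 + 1 * p.2))
      = (fun p : ℝ × ℝ => (p.1 + t * p.2, p.2)) from funext fun p => by norm_num] at h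
    exact h
  have hlower : ∀ t : ℝ, ∀ A : Set (ℝ × ℝ), MeasurableSet A →
      P ((fun p : ℝ × ℝ => (p.1, t * p.1 + p.2)) ⁻¹' A) = P A := by
    intro t A hA
    have h := hinv 1 0 t 1 (by ring) A hA
    rw [show (fun p : ℝ × ℝ => (1 * p.1 + 0 * p.2, t * p.1 + 1 * p.2))
      = (fun p : ℝ × ℝ => (p.1, t * p.1 + p.2)) from funext fun p => by norm_num] at h
    exact h
  have hrot : ∀ A : Set (ℝ × ℝ), MeasurableSet A →
      P ((fun p : ℝ × ℝ => (p.2, -p.1)) ⁻¹' A) = P A := by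
    intro A hA
    have h := hinv 0 1 (-1) 0 (by ring) A hA
    rw [show (fun p : ℝ × ℝ => (0 * p.1 + 1 * p.2, -1 * p.1 + 0 * p.2))
      = (fun p : ℝ × ℝ => (p.2, -p.1)) from funext fun p => by norm_num] at h
    exact h
  -- the axes are null
  have hxm : MeasurableSet {p : ℝ × ℝ | p.2 = 0 ∧ p ≠ 0} := by
    have heq : {p : ℝ × ℝ | p.2 = 0 ∧ p ≠ 0} = {p : ℝ × ℝ | p.2 = 0} \ {0} := by
      ext p
      simp only [Set.mem_setOf_eq, Set.mem_diff, Set.mem_singleton_iff]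
    rw [heq]
    exact (measurableSet_eq_fun measurable_snd measurable_const).diff
      (measurableSet_singleton _)
  have hx : P {p : ℝ × ℝ | p.2 = 0 ∧ p ≠ 0} = 0 := axis_null P hfin hlower
  have hxfull : P {p : ℝ × ℝ | p.2 = 0} = 0 := by
    have hsub : {p : ℝ × ℝ | p.2 = 0} ⊆ {p : ℝ × ℝ | p.2 = 0 ∧ p ≠ 0} ∪ {0} := by
      intro p hp
      by_cases h : p = 0
      · exact Or.inr h
      · exact Or.inl ⟨hp, h⟩
    apply measure_mono_null hsub
    apply le_antisymm _ zero_le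
    apply le_trans (measure_union_le _ _)
    rw [hx, hzero, add_zero]
  have hyfull : P {p : ℝ × ℝ | p.1 = 0} = 0 := by
    have hsub : {p : ℝ × ℝ | p.1 = 0} ⊆
        ((fun p : ℝ × ℝ => (p.2, -p.1)) ⁻¹' {p : ℝ × ℝ | p.2 = 0 ∧ p ≠ 0}) ∪ {0} := by
      intro p hp
      by_cases h : p = 0
      · exact Or.inr h
      · left
        simp only [Set.mem_preimage, Set.mem_setOf_eq]
        constructor
        · simpa using hp
        · intro hcontra
          apply h
          have h1 : p.2 = 0 := by
            have := congrArg Prod.fst hcontra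
            simpa using this
          have h2 : p.1 = 0 := hp
          exact Prod.ext h2 h1
      
    apply measure_mono_null hsub
    apply le_antisymm _ zero_le
    apply le_trans (measure_union_le _ _)
    rw [hzero, add_zero]
    rw [hrot _ hxm]
    exact le_of_eq hx
  -- horizontal translation invariance
  have hxtrans : ∀ c : ℝ, ∀ A : Set (ℝ × ℝ), MeasurableSet A →
      P ((fun p : ℝ × ℝ => (p.1 + c, p.2)) ⁻¹' A) = P A :=
    shear_to_translation P hfin hxfull hupper
  -- vertical translation invariance, via the swapped measure
  have hytrans : ∀ c : ℝ, ∀ A : Set (ℝ × ℝ), MeasurableSet A →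
      P ((fun p : ℝ × ℝ => (p.1, p.2 + c)) ⁻¹' A) = P A := by
    set Q : Measure (ℝ × ℝ) := P.map Prod.swap with hQ_def
    have hswapm : Measurable (Prod.swap : ℝ × ℝ → ℝ × ℝ) := measurable_swap
    have hQ : ∀ B : Set (ℝ × ℝ), MeasurableSet B → Q B = P (Prod.swap ⁻¹' B) := by
      intro B hB
      rw [hQ_def, Measure.map_apply hswapm hB]
    have hQfin : ∀ R : ℝ, Q (Metric.closedBall 0 R) ≠ ⊤ := by
      intro R
      rw [hQ _ measurableSet_closedBall]
      have : (Prod.swap : ℝ × ℝ → ℝ × ℝ) ⁻¹' Metric.closedBall 0 R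
          = Metric.closedBall 0 R := by
        ext p
        simp only [Set.mem_preimage, Metric.mem_closedBall, Prod.dist_eq]
        rw [show ((0:ℝ×ℝ)).1 = (0:ℝ) from rfl, show ((0:ℝ×ℝ)).2 = (0:ℝ) from rfl]
        simp [Prod.fst_swap, Prod.snd_swap, max_comm]
      rw [this]
      exact hfin R
    have hQaxis : Q {p : ℝ × ℝ | p.2 = 0} = 0 := by
      rw [hQ _ (measurableSet_eq_fun measurable_snd measurable_const)]
      have : (Prod.swap : ℝ × ℝ → ℝ × ℝ) ⁻¹' {p : ℝ × ℝ | p.2 = 0}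
          = {p : ℝ × ℝ | p.1 = 0} := by
        ext p; simp
      rw [this]
      exact hyfull
    have hQshear : ∀ t : ℝ, ∀ A : Set (ℝ × ℝ), MeasurableSet A →
        Q ((fun p : ℝ × ℝ => (p.1 + t * p.2, p.2)) ⁻¹' A) = Q A := by
      intro t A hA
      have hStm : Measurable (fun p : ℝ × ℝ => (p.1 + t * p.2, p.2)) :=
        (measurable_fst.add (measurable_const.mul measurable_snd)).prodMk measurable_snd
      rw [hQ _ (hStm hA), hQ _ hA]
      have hseteq : (Prod.swap : ℝ × ℝ → ℝ × ℝ) ⁻¹'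
            ((fun p : ℝ × ℝ => (p.1 + t * p.2, p.2)) ⁻¹' A)
          = (fun p : ℝ × ℝ => (p.1, t * p.1 + p.2)) ⁻¹' (Prod.swap ⁻¹' A) := by
        ext p
        simp only [Set.mem_preimage, Prod.swap_prod_mk]
        constructor
        · intro h
          convert h using 2 <;> simp [add_comm, mul_comm] <;> ring_nf
        · intro h
          convert h using 2 <;> simp [add_comm, mul_comm] <;> ring_nf
      rw [hseteq]
      exact hlower t _ (hswapm hA)
    have hQtrans := shear_to_translation Q hQfin hQaxis hQshear
    intro c A hA
    have hLm : Measurable (fun p : ℝ × ℝ => (p.1 + c, p.2)) :=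
      (measurable_fst.add measurable_const).prodMk measurable_snd
    have key : (fun p : ℝ × ℝ => (p.1, p.2 + c)) ⁻¹' A
        = Prod.swap ⁻¹' ((fun p : ℝ × ℝ => (p.1 + c, p.2)) ⁻¹' (Prod.swap ⁻¹' A)) := by
      ext p
      simp [Set.mem_preimage, Prod.swap_prod_mk]
    rw [key, ← hQ _ (hLm (hswapm hA)), hQtrans c _ (hswapm hA), hQ _ (hswapm hA)]
    have : (Prod.swap : ℝ × ℝ → ℝ × ℝ) ⁻¹' (Prod.swap ⁻¹' A) = A := by
      ext p; simp
    rw [this]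
  -- full translation invariance
  haveI hPinv : P.IsAddLeftInvariant := by
    constructor
    intro q
    apply Measure.ext
    intro A hA
    rw [Measure.map_apply (measurable_const_add q) hA]
    have hseteq : (fun z : ℝ × ℝ => q + z) ⁻¹' A
        = (fun p : ℝ × ℝ => (p.1 + q.1, p.2)) ⁻¹' ((fun p : ℝ × ℝ => (p.1, p.2 + q.2)) ⁻¹' A) := by
      ext z
      simp only [Set.mem_preimage, Prod.mk_add_mk]
      have : q + z = (z.1 + q.1, z.2 + q.2) := by
        rw [Prod.ext_iff]
        constructor <;> simp [add_comm]
      rw [this]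
    rw [hseteq]
    have hvm : Measurable (fun p : ℝ × ℝ => (p.1, p.2 + q.2)) :=
      measurable_fst.prodMk (measurable_snd.add measurable_const)
    rw [hxtrans q.1 _ (hvm hA), hytrans q.2 _ hA]
  haveI hPfoc : IsFiniteMeasureOnCompacts P := by
    constructor
    intro K hK
    obtain ⟨R, hRK⟩ := hK.isBounded.subset_closedBall 0
    exact lt_of_le_of_lt (measure_mono hRK) (lt_top_iff_ne_top.mpr (hfin R))
  exact ⟨P.addHaarScalarFactor volume, Measure.isAddLeftInvariant_eq_smul P volume⟩



end SV

-- add-on: coordinates of the action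
namespace SV

lemma act_coord0 (g : SL2) (x : E2) :
    act g x 0 = (g : Matrix (Fin 2) (Fin 2) ℝ) 0 0 * x 0
      + (g : Matrix (Fin 2) (Fin 2) ℝ) 0 1 * x 1 := by
  unfold act
  rw [equiv_symm_apply']
  simp [Matrix.mulVec, dotProduct, Fin.sum_univ_two, equiv_apply']

lemma act_coord1 (g : SL2) (x : E2) :
    act g x 1 = (g : Matrix (Fin 2) (Fin 2) ℝ) 1 0 * x 0
      + (g : Matrix (Fin 2) (Fin 2) ℝ) 1 1 * x 1 := by
  unfold act
  rw [equiv_symm_apply']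
  simp [Matrix.mulVec, dotProduct, Fin.sum_univ_two, equiv_apply']

end SV


open SV in
/-- Theorem 6.1(a) (Veech): under the standing hypotheses on the `SL(2,ℝ)`-space
`(ℳ, μ)` and the assignment `ω ↦ ν_ω` of weighted point-mass measures on the
plane, there is a constant `c ≥ 0` such that for every continuous compactly
supported `f : ℝ² → ℝ` the function `ω ↦ ∫ f dν_ω` is `μ`-integrable and its
mean equals `c ∫ f dx`. -/
theorem siegel_veech_mean
    {M : Type} [MetricSpace M] [LocallyCompactSpace M]
    [MeasurableSpace M] [BorelSpace M]
    (μ : Measure M) [IsFiniteMeasure μ] (hμ : μ Set.univ ≠ 0)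
    [MulAction (Matrix.SpecialLinearGroup (Fin 2) ℝ) M]
    (hcont : ∀ g : Matrix.SpecialLinearGroup (Fin 2) ℝ,
      Continuous (fun ω : M => g • ω))
    (hpres : ∀ g : Matrix.SpecialLinearGroup (Fin 2) ℝ,
      MeasurePreserving (fun ω : M => g • ω) μ μ)
    (herg : ∀ A : Set M, MeasurableSet A →
      (∀ g : Matrix.SpecialLinearGroup (Fin 2) ℝ, (fun ω : M => g • ω) '' A = A) →
      μ A = 0 ∨ μ Aᶜ = 0)
    (ν : M → Measure (EuclideanSpace ℝ (Fin 2)))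
    (hν : ∀ ω : M, ∃ (ι : Type) (_ : Countable ι)
        (v : ι → EuclideanSpace ℝ (Fin 2)) (w : ι → ℝ),
      (∀ k, v k ≠ 0) ∧ (∀ k, 0 < w k) ∧ (∃ C : ℝ, ∀ k, w k ≤ C) ∧
      Tendsto (fun k => ‖v k‖) cofinite atTop ∧
      ν ω = Measure.sum (fun k => ENNReal.ofReal (w k) • Measure.dirac (v k)))
    (h0 : ∀ f : EuclideanSpace ℝ (Fin 2) → ℝ, Continuous f → HasCompactSupport f →
      Measurable (fun ω : M => ∫ x, f x ∂(ν ω)))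
    (hA : ∀ (g : Matrix.SpecialLinearGroup (Fin 2) ℝ) (ω : M),
      ν (g • ω) = Measure.map
        (fun x => (EuclideanSpace.equiv (Fin 2) ℝ).symm
          (Matrix.mulVec (g : Matrix (Fin 2) (Fin 2) ℝ)
            (EuclideanSpace.equiv (Fin 2) ℝ x))) (ν ω))
    (hB : ∀ K : Set M, IsCompact K → ∃ c > (0 : ℝ), ∀ ω ∈ K, ∀ T : ℝ, 1 < T →
      ν ω {x | ‖x‖ ≤ T} ≤ ENNReal.ofReal (c * T ^ 2))
    (hC : ∃ T₀ > (0 : ℝ), ∃ ε > (0 : ℝ), MemLp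
      (fun ω : M => (ν ω {x | ‖x‖ ≤ T₀}).toReal) (ENNReal.ofReal (1 + ε)) μ) :
    ∃ c : ℝ, 0 ≤ c ∧
      ∀ f : EuclideanSpace ℝ (Fin 2) → ℝ, Continuous f → HasCompactSupport f →
        Integrable (fun ω : M => ∫ x, f x ∂(ν ω)) μ ∧
        (μ Set.univ).toReal⁻¹ * ∫ ω, (∫ x, f x ∂(ν ω)) ∂μ = c * ∫ x, f x := by
  classical
  obtain ⟨T₀, hT₀pos, ε, hε, hmem⟩ := hC
  have hpt : ∀ ω : M, IsPtMeasure (ν ω) := hν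
  have hfinc : ∀ ω : M, IsFiniteMeasureOnCompacts (ν ω) := fun ω => (hpt ω).finiteOnCompacts
  have hzero : ∀ ω : M, ν ω ({0} : Set E2) = 0 := fun ω => (hpt ω).zero_mem
  have hmeasν : Measurable ν := measurable_nu hfinc h0
  have hAa : ∀ (g : SL2) (ω : M), ν (g • ω) = (ν ω).map (act g) := hA
  -- ## integrability of the mass of balls, radius `T₀`
  have hGset : {x : E2 | ‖x‖ ≤ T₀} = Metric.closedBall 0 T₀ := by
    ext x; simp [dist_zero_right]
  rw [hGset] at hmem
  have h1le : (1 : ENNReal) ≤ ENNReal.ofReal (1 + ε) := by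
    rw [← ENNReal.ofReal_one]
    exact ENNReal.ofReal_le_ofReal (by linarith)
  have hint0 : Integrable (fun ω => (ν ω (Metric.closedBall 0 T₀)).toReal) μ :=
    memLp_one_iff_integrable.mp (hmem.mono_exponent h1le)
  have hT₀fin : ∫⁻ ω, ν ω (Metric.closedBall 0 T₀) ∂μ ≠ ⊤ := by
    have hcongr : ∀ ω : M, ν ω (Metric.closedBall 0 T₀)
        = ENNReal.ofReal ((ν ω (Metric.closedBall 0 T₀)).toReal) := fun ω =>
      (ENNReal.ofReal_toReal ((hpt ω).ball_lt_top T₀).ne).symm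
    calc ∫⁻ ω, ν ω (Metric.closedBall 0 T₀) ∂μ
        = ∫⁻ ω, ENNReal.ofReal ((ν ω (Metric.closedBall 0 T₀)).toReal) ∂μ :=
          lintegral_congr hcongr
      _ ≠ ⊤ := hint0.lintegral_lt_top.ne
  -- ## integrability of the mass of balls, all radii (Eskin–Masur trick)
  have hball : ∀ T : ℝ, ∫⁻ ω, ν ω (Metric.closedBall 0 T) ∂μ ≠ ⊤ := by
    intro T
    set T' : ℝ := max T 1 with hT'_def
    have hT' : 0 < T' := lt_of_lt_of_le one_pos (le_max_right _ _)
    have hsub : Metric.closedBall (0 : E2) T ⊆ Metric.closedBall 0 T' :=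
      Metric.closedBall_subset_closedBall (le_max_left _ _)
    apply ne_top_of_le_ne_top _ (lintegral_mono fun ω => measure_mono hsub)
    obtain ⟨s, hs⟩ := covering T₀ T' hT₀pos hT'
    have hcov : Metric.closedBall (0 : E2) T' ⊆
        ⋃ g ∈ s, (act g) ⁻¹' (Metric.closedBall 0 T₀) := by
      intro x hx
      rw [Metric.mem_closedBall, dist_zero_right] at hx
      obtain ⟨g, hgs, hgx⟩ := hs x hx
      exact Set.mem_biUnion hgs
        (by rw [Set.mem_preimage, Metric.mem_closedBall, dist_zero_right]; exact hgx)
    have hstep : ∀ ω, ν ω (Metric.closedBall 0 T')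
        ≤ ∑ g ∈ s, ν ω ((act g) ⁻¹' (Metric.closedBall 0 T₀)) := fun ω =>
      le_trans (measure_mono hcov) (measure_biUnion_finset_le _ _)
    apply ne_top_of_le_ne_top _ (lintegral_mono hstep)
    rw [lintegral_finset_sum (f := fun (g : SL2) (ω : M) =>
        ν ω (act g ⁻¹' Metric.closedBall 0 T₀)) s (fun g _ =>
      (Measure.measurable_coe ((measurable_act g) measurableSet_closedBall)).comp hmeasν)]
    have hterm : ∀ g : SL2, ∫⁻ ω, ν ω ((act g) ⁻¹' (Metric.closedBall 0 T₀)) ∂μ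
        = ∫⁻ ω, ν ω (Metric.closedBall 0 T₀) ∂μ := by
      intro g
      have h1 : ∀ ω : M, ν ω ((act g) ⁻¹' (Metric.closedBall 0 T₀))
          = ν (g • ω) (Metric.closedBall 0 T₀) := by
        intro ω
        rw [hAa g ω, Measure.map_apply (measurable_act g) measurableSet_closedBall]
      calc ∫⁻ ω, ν ω ((act g) ⁻¹' (Metric.closedBall 0 T₀)) ∂μ
          = ∫⁻ ω, ν (g • ω) (Metric.closedBall 0 T₀) ∂μ := lintegral_congr h1
        _ = ∫⁻ ω, ν ω (Metric.closedBall 0 T₀) ∂μ :=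
            (hpres g).lintegral_comp
              ((Measure.measurable_coe measurableSet_closedBall).comp hmeasν)
    apply ne_of_lt
    apply ENNReal.sum_lt_top.mpr
    intro g _
    rw [hterm g]
    exact lt_top_iff_ne_top.mpr hT₀fin
  -- ## the global measure m on the plane
  set m : Measure E2 := μ.bind ν with hm_def
  have hm_apply : ∀ A : Set E2, MeasurableSet A → m A = ∫⁻ ω, ν ω A ∂μ :=
    fun A hA' => Measure.bind_apply hA' hmeasν.aemeasurable
  have hm_lint : ∀ φ : E2 → ENNReal, Measurable φ →
      ∫⁻ x, φ x ∂m = ∫⁻ ω, ∫⁻ x, φ x ∂ν ω ∂μ :=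
    fun φ hφ => Measure.lintegral_bind hmeasν.aemeasurable hφ.aemeasurable
  have hm_ball : ∀ R : ℝ, m (Metric.closedBall 0 R) ≠ ⊤ := by
    intro R
    rw [hm_apply _ measurableSet_closedBall]
    exact hball R
  have hm_zero : m ({0} : Set E2) = 0 := by
    rw [hm_apply _ (measurableSet_singleton 0)]
    calc ∫⁻ ω, ν ω ({0} : Set E2) ∂μ = ∫⁻ _ω, 0 ∂μ := lintegral_congr hzero
      _ = 0 := lintegral_zero
  have hm_inv : ∀ g : SL2, ∀ A : Set E2, MeasurableSet A → m (act g ⁻¹' A) = m A := by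
    intro g A hA'
    rw [hm_apply _ ((measurable_act g) hA'), hm_apply _ hA']
    have h1 : ∀ ω : M, ν ω (act g ⁻¹' A) = ν (g • ω) A := by
      intro ω
      rw [hAa g ω, Measure.map_apply (measurable_act g) hA']
    calc ∫⁻ ω, ν ω (act g ⁻¹' A) ∂μ = ∫⁻ ω, ν (g • ω) A ∂μ := lintegral_congr h1
      _ = ∫⁻ ω, ν ω A ∂μ :=
          (hpres g).lintegral_comp ((Measure.measurable_coe hA').comp hmeasν)
  -- ## transport to ℝ × ℝ
  set e : E2 ≃ᵐ ℝ × ℝ :=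
    (MeasurableEquiv.toLp 2 (Fin 2 → ℝ)).symm.trans MeasurableEquiv.finTwoArrow with he_def
  have he_apply : ∀ x : E2, e x = (x 0, x 1) := fun x => rfl
  have he_vol : MeasurePreserving (⇑e) volume volume := by
    have := (volume_preserving_finTwoArrow ℝ).comp
      (EuclideanSpace.volume_preserving_symm_measurableEquiv_toLp (ι := Fin 2))
    simpa [he_def, MeasurableEquiv.coe_trans] using this
  set P : Measure (ℝ × ℝ) := m.map e with hP_def
  have hP_apply : ∀ B : Set (ℝ × ℝ), MeasurableSet B → P B = m (e ⁻¹' B) :=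
    fun B hB => Measure.map_apply e.measurable hB
  have hPfin : ∀ R : ℝ, P (Metric.closedBall 0 R) ≠ ⊤ := by
    intro R
    rw [hP_apply _ measurableSet_closedBall]
    set R' : ℝ := max R 0 with hR'_def
    have hR'0 : 0 ≤ R' := le_max_right _ _
    have hsub : e ⁻¹' Metric.closedBall 0 R ⊆ Metric.closedBall (0 : E2) (2 * R') := by
      intro x hx
      rw [Set.mem_preimage, Metric.mem_closedBall, he_apply] at hx
      have h0' : |x 0| ≤ R' := by
        have := le_trans (le_max_left _ _) ((Prod.dist_eq (x := ((x 0, x 1) : ℝ × ℝ))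
          (y := 0)) ▸ hx)
        rw [show ((0 : ℝ × ℝ)).1 = (0:ℝ) from rfl, Real.dist_0_eq_abs] at this
        exact le_trans this (le_max_left _ _)
      have h1' : |x 1| ≤ R' := by
        have := le_trans (le_max_right _ _) ((Prod.dist_eq (x := ((x 0, x 1) : ℝ × ℝ))
          (y := 0)) ▸ hx)
        rw [show ((0 : ℝ × ℝ)).2 = (0:ℝ) from rfl, Real.dist_0_eq_abs] at this
        exact le_trans this (le_max_left _ _)
      rw [Metric.mem_closedBall, dist_zero_right]
      apply norm_le_of_sq x (2 * R') (by positivity)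
      nlinarith [sq_abs (x 0), sq_abs (x 1), abs_nonneg (x 0), abs_nonneg (x 1)]
    exact ne_top_of_le_ne_top (hm_ball (2 * R')) (measure_mono hsub)
  have hPzero : P ({0} : Set (ℝ × ℝ)) = 0 := by
    rw [hP_apply _ (measurableSet_singleton 0)]
    have hset : e ⁻¹' ({0} : Set (ℝ × ℝ)) = ({0} : Set E2) := by
      ext x
      simp only [Set.mem_preimage, Set.mem_singleton_iff]
      constructor
      · intro h
        exact e.injective (by rw [h]; rfl)
      · intro h
        rw [h]; rfl
    rw [hset]
    exact hm_zero
  have hPinv : ∀ a b c d : ℝ, a * d - b * c = 1 → ∀ A : Set (ℝ × ℝ), MeasurableSet A →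
      P ((fun p : ℝ × ℝ => (a * p.1 + b * p.2, c * p.1 + d * p.2)) ⁻¹' A) = P A := by
    intro a b c d hdet A hA'
    set g : SL2 := ⟨!![a, b; c, d], by rw [Matrix.det_fin_two_of]; exact hdet⟩ with hg_def
    have hgc : (g : Matrix (Fin 2) (Fin 2) ℝ) = !![a, b; c, d] := rfl
    have hFm : Measurable (fun p : ℝ × ℝ => (a * p.1 + b * p.2, c * p.1 + d * p.2)) :=
      ((measurable_const.mul measurable_fst).add
        (measurable_const.mul measurable_snd)).prodMk
        ((measurable_const.mul measurable_fst).add (measurable_const.mul measurable_snd))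
    have hcomp : ∀ x : E2,
        ((a * (e x).1 + b * (e x).2, c * (e x).1 + d * (e x).2) : ℝ × ℝ) = e (act g x) := by
      intro x
      rw [he_apply, he_apply]
      have h00 : act g x 0 = a * x 0 + b * x 1 := by
        rw [act_coord0, hgc]
        simp [Matrix.cons_val_zero, Matrix.cons_val_one, Matrix.head_cons]
      have h11 : act g x 1 = c * x 0 + d * x 1 := by
        rw [act_coord1, hgc]
        simp [Matrix.cons_val_zero, Matrix.cons_val_one, Matrix.head_cons]
      rw [h00, h11]
    have hset : e ⁻¹' ((fun p : ℝ × ℝ => (a * p.1 + b * p.2, c * p.1 + d * p.2)) ⁻¹' A)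
        = act g ⁻¹' (e ⁻¹' A) := by
      ext x
      simp only [Set.mem_preimage]
      rw [hcomp x]
    rw [hP_apply _ (hFm hA'), hset, hm_inv g _ (e.measurable hA'), ← hP_apply _ hA']
  obtain ⟨c₀, hPc⟩ := classify P hPfin hPinv hPzero
  -- ## the Siegel transform of nonnegative functions
  have hSiegelInt : ∀ φ : E2 → ℝ, Continuous φ → HasCompactSupport φ →
      Integrable (fun ω : M => ∫ x, φ x ∂ν ω) μ := by
    intro φ hφ hφc
    obtain ⟨R, hR⟩ := hφc.isBounded.subset_closedBall 0
    obtain ⟨x₀, hx₀⟩ := hφ.norm.exists_forall_ge_of_hasCompactSupport hφc.norm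
    have hφzero : ∀ x ∉ Metric.closedBall (0 : E2) R, φ x = 0 := fun x hx =>
      image_eq_zero_of_notMem_tsupport (fun h => hx (hR h))
    have hbound_int : Integrable
        (fun ω : M => ‖φ x₀‖ * (ν ω (Metric.closedBall 0 R)).toReal) μ := by
      apply Integrable.const_mul
      apply integrable_toReal_of_lintegral_ne_top
      · exact ((Measure.measurable_coe measurableSet_closedBall).comp hmeasν).aemeasurable
      · exact hball R
    apply Integrable.mono' hbound_int (h0 φ hφ hφc).aestronglyMeasurable
    refine Filter.Eventually.of_forall fun ω => ?_
    haveI := hfinc ω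
    have h1 : ∫ x, φ x ∂ν ω = ∫ x in Metric.closedBall 0 R, φ x ∂ν ω :=
      (setIntegral_eq_integral_of_forall_compl_eq_zero (fun x hx => hφzero x hx)).symm
    rw [h1]
    exact norm_setIntegral_le_of_norm_le_const ((hpt ω).ball_lt_top R)
      (fun x _ => hx₀ x)
  -- key identity for nonnegative functions
  have key : ∀ φ : E2 → ℝ, Continuous φ → HasCompactSupport φ → (∀ x, 0 ≤ φ x) →
      ∫ ω, (∫ x, φ x ∂ν ω) ∂μ = (c₀ : NNReal).toReal * ∫ x, φ x := by
    intro φ hφ hφc hφ0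
    obtain ⟨Rφ, hRφ⟩ := hφc.isBounded.subset_closedBall 0
    obtain ⟨y₀, hy₀⟩ := hφ.exists_forall_ge_of_hasCompactSupport hφc
    have hfib : ∀ ω : M, ∫ x, φ x ∂ν ω
        = (∫⁻ x, ENNReal.ofReal (φ x) ∂ν ω).toReal := by
      intro ω
      haveI := hfinc ω
      rw [integral_eq_lintegral_of_nonneg_ae (Filter.Eventually.of_forall hφ0)
        hφ.aestronglyMeasurable]
    have hFl_meas : Measurable fun ω : M => ∫⁻ x, ENNReal.ofReal (φ x) ∂ν ω :=
      (Measure.measurable_lintegral (hφ.measurable.ennreal_ofReal)).comp hmeasν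
    have hFl_fin : ∀ ω : M, (∫⁻ x, ENNReal.ofReal (φ x) ∂ν ω) ≠ ⊤ := by
      intro ω
      have hb : ∀ x : E2, ENNReal.ofReal (φ x)
          ≤ (Metric.closedBall (0 : E2) Rφ).indicator
            (fun _ => ENNReal.ofReal (φ y₀)) x := by
        intro x
        by_cases hx : x ∈ Metric.closedBall (0 : E2) Rφ
        · rw [Set.indicator_of_mem hx]
          exact ENNReal.ofReal_le_ofReal (hy₀ x)
        · rw [Set.indicator_of_notMem hx]
          have : φ x = 0 := image_eq_zero_of_notMem_tsupport (fun h => hx (hRφ h))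
          simp [this]
      apply ne_top_of_le_ne_top _ (lintegral_mono hb)
      rw [lintegral_indicator measurableSet_closedBall]
      rw [setLIntegral_const]
      exact ENNReal.mul_ne_top ENNReal.ofReal_ne_top ((hpt ω).ball_lt_top Rφ).ne
    have hmP : m = P.map e.symm := by
      rw [hP_def, Measure.map_map e.symm.measurable e.measurable]
      have hid : (⇑e.symm ∘ ⇑e) = id := by
        funext x; simp
      rw [hid, Measure.map_id]
    calc ∫ ω, (∫ x, φ x ∂ν ω) ∂μ
        = ∫ ω, (∫⁻ x, ENNReal.ofReal (φ x) ∂ν ω).toReal ∂μ :=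
          integral_congr_ae (Filter.Eventually.of_forall hfib)
      _ = (∫⁻ ω, ∫⁻ x, ENNReal.ofReal (φ x) ∂ν ω ∂μ).toReal :=
          integral_toReal hFl_meas.aemeasurable
            (Filter.Eventually.of_forall fun ω => lt_top_iff_ne_top.mpr (hFl_fin ω))
      _ = (∫⁻ x, ENNReal.ofReal (φ x) ∂m).toReal := by
          rw [hm_lint _ (hφ.measurable.ennreal_ofReal)]
      _ = ((c₀ : ENNReal) * ∫⁻ x, ENNReal.ofReal (φ x) ∂(volume : Measure E2)).toReal := by
          rw [hmP, hPc]
          rw [show ((c₀ • volume : Measure (ℝ × ℝ)).map e.symm)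
            = (((c₀ : ENNReal) • volume : Measure (ℝ × ℝ)).map e.symm) from rfl]
          rw [Measure.map_smul]
          rw [lintegral_smul_measure]
          congr 1
          have := (he_vol.symm e).lintegral_comp (f := fun x => ENNReal.ofReal (φ x))
            (hφ.measurable.ennreal_ofReal)
          rw [← this]
          rw [lintegral_map (hφ.measurable.ennreal_ofReal) e.symm.measurable]
          rfl
      _ = (c₀ : NNReal).toReal * ∫ x, φ x := by
          rw [ENNReal.toReal_mul, ENNReal.coe_toReal]
          rw [integral_eq_lintegral_of_nonneg_ae (Filter.Eventually.of_forall hφ0)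
            hφ.aestronglyMeasurable]
  -- ## conclusion
  refine ⟨(μ Set.univ).toReal⁻¹ * (c₀ : NNReal).toReal,
    mul_nonneg (inv_nonneg.mpr ENNReal.toReal_nonneg) c₀.coe_nonneg, ?_⟩
  intro f hf hfc
  refine ⟨hSiegelInt f hf hfc, ?_⟩
  -- split into positive and negative parts
  set fp : E2 → ℝ := fun x => max (f x) 0 with hfp_def
  set fm : E2 → ℝ := fun x => max (-f x) 0 with hfm_def
  have hfp_cont : Continuous fp := hf.max continuous_const
  have hfm_cont : Continuous fm := hf.neg.max continuous_const
  have hfp_cs : HasCompactSupport fp := by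
    apply HasCompactSupport.comp_left (g := fun y : ℝ => max y 0) hfc
    simp
  have hfm_cs : HasCompactSupport fm := by
    apply HasCompactSupport.comp_left (g := fun y : ℝ => max (-y) 0) hfc
    simp
  have hfp0 : ∀ x, 0 ≤ fp x := fun x => le_max_right _ _
  have hfm0 : ∀ x, 0 ≤ fm x := fun x => le_max_right _ _
  have hsplit : ∀ x : E2, f x = fp x - fm x := fun x =>
    (max_zero_sub_eq_self (f x)).symm
  have hfib_split : ∀ ω : M, ∫ x, f x ∂ν ω = (∫ x, fp x ∂ν ω) - ∫ x, fm x ∂ν ω := by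
    intro ω
    haveI := hfinc ω
    rw [← integral_sub (hfp_cont.integrable_of_hasCompactSupport hfp_cs)
      (hfm_cont.integrable_of_hasCompactSupport hfm_cs)]
    exact integral_congr_ae (Filter.Eventually.of_forall fun x => hsplit x)
  have hout : ∫ ω, (∫ x, f x ∂ν ω) ∂μ
      = (∫ ω, (∫ x, fp x ∂ν ω) ∂μ) - ∫ ω, (∫ x, fm x ∂ν ω) ∂μ := by
    rw [← integral_sub (hSiegelInt fp hfp_cont hfp_cs) (hSiegelInt fm hfm_cont hfm_cs)]
    exact integral_congr_ae (Filter.Eventually.of_forall fun ω => hfib_split ω)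
  have hvol_split : ∫ x, f x = (∫ x, fp x) - ∫ x, fm x := by
    rw [← integral_sub (hfp_cont.integrable_of_hasCompactSupport hfp_cs)
      (hfm_cont.integrable_of_hasCompactSupport hfm_cs)]
    exact integral_congr_ae (Filter.Eventually.of_forall fun x => hsplit x)
  rw [hout, key fp hfp_cont hfp_cs hfp0, key fm hfm_cont hfm_cs hfm0, hvol_split]
  ring
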